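/- For the n-qubit GHZ state |GHZ_n⟩ = (|0…0⟩ + |1…1⟩)/√2 with n ≥ 2, the entanglement eigenvalue equals 1/√2, hence E_G(GHZ_n) = 1/2. -/

import Mathlib

open scoped BigOperators
open Matrix

/-- The set of unit-norm fully separable pure states of `n` qubits. -/
def SepStates (n : ℕ) : Set ((Fin n → Fin 2) → ℂ) :=
  {φ | ∃ v : Fin n → (Fin 2 → ℂ),
    (∀ i, ∑ x : Fin 2, Complex.normSq (v i x) = 1) ∧
    ∀ f : Fin n → Fin 2, φ f = ∏ i : Fin n, v i (f i)}

/-- The entanglement eigenvalue `λ̂(ψ)`. -/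
noncomputable def EntEigenvalue (n : ℕ) (ψ : (Fin n → Fin 2) → ℂ) : ℝ :=
  sSup {r : ℝ | ∃ φ ∈ SepStates n, r = ‖star φ ⬝ᵥ ψ‖}

/-- Geometric measure of entanglement. -/
noncomputable def GeomEnt (n : ℕ) (ψ : (Fin n → Fin 2) → ℂ) : ℝ :=
  1 - sSup {r : ℝ | ∃ φ ∈ SepStates n, r = (‖star φ ⬝ᵥ ψ‖)^2}

/-- The `n`-qubit GHZ state `(|0…0⟩ + |1…1⟩)/√2`. -/
noncomputable def GHZ (n : ℕ) : (Fin n → Fin 2) → ℂ :=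
  fun f => if (∀ i, f i = 0) ∨ (∀ i, f i = 1) then (1 / Real.sqrt 2 : ℝ) else 0

-- key inequality
lemma prod_add_prod_le (n : ℕ) (hn : 2 ≤ n) (a b : Fin n → ℝ)
    (ha : ∀ i, 0 ≤ a i) (hb : ∀ i, 0 ≤ b i)
    (h : ∀ i, a i ^ 2 + b i ^ 2 = 1) :
    (∏ i, a i) + (∏ i, b i) ≤ 1 := by
  have h2 : (0:ℕ) < n := by omega
  set i0 : Fin n := ⟨0, by omega⟩
  set i1 : Fin n := ⟨1, by omega⟩
  have hne : i0 ≠ i1 := by simp [i0, i1, Fin.ext_iff]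
  have hle1 : ∀ i, a i ≤ 1 := fun i => by nlinarith [ha i, hb i, h i]
  have hle1' : ∀ i, b i ≤ 1 := fun i => by nlinarith [ha i, hb i, h i]
  have key : ∀ (c : Fin n → ℝ), (∀ i, 0 ≤ c i) → (∀ i, c i ≤ 1) →
      (∏ i, c i) ≤ c i0 * c i1 := by
    intro c hc hc1
    have hsub : ({i0, i1} : Finset (Fin n)) ⊆ Finset.univ := Finset.subset_univ _
    calc (∏ i, c i) = (∏ i ∈ ({i0,i1} : Finset (Fin n)), c i) *
          ∏ i ∈ ({i0,i1} : Finset (Fin n))ᶜ, c i := (Finset.prod_mul_prod_compl _ _).symm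
      _ ≤ (∏ i ∈ ({i0,i1} : Finset (Fin n)), c i) * 1 := by
          apply mul_le_mul_of_nonneg_left
          · exact Finset.prod_le_one (fun i _ => hc i) (fun i _ => hc1 i)
          · exact Finset.prod_nonneg (fun i _ => hc i)
      _ = c i0 * c i1 := by rw [mul_one, Finset.prod_pair hne]
  have h1 := key a ha hle1
  have h2 := key b hb hle1'
  nlinarith [h i0, h i1, sq_nonneg (a i0 - a i1), sq_nonneg (b i0 - b i1), Finset.prod_nonneg (fun i (_ : i ∈ Finset.univ) => ha i), Finset.prod_nonneg (fun i (_ : i ∈ Finset.univ) => hb i)]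

/-- For `n ≥ 2`, the entanglement eigenvalue of the GHZ state is `1/√2`,
hence `E_G(GHZ_n) = 1/2`. -/
theorem ghz_entEigenvalue_and_geomEnt (n : ℕ) (hn : 2 ≤ n) :
    EntEigenvalue n (GHZ n) = 1 / Real.sqrt 2 ∧ GeomEnt n (GHZ n) = 1 / 2 := by
  have hs2 : (0:ℝ) < Real.sqrt 2 := Real.sqrt_pos.2 (by norm_num)
  set c0 : Fin n → Fin 2 := fun _ => 0 with hc0
  set c1 : Fin n → Fin 2 := fun _ => 1 with hc1
  have hcne : c0 ≠ c1 := by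
    intro h
    have := congrFun h ⟨0, by omega⟩
    simp [c0, c1] at this
  -- overlap formula
  have hover : ∀ φ ∈ SepStates n,
      star φ ⬝ᵥ GHZ n = ((1 / Real.sqrt 2 : ℝ) : ℂ) * (star (φ c0) + star (φ c1)) := by
    intro φ _
    have hvan : ∀ f ∈ (Finset.univ : Finset (Fin n → Fin 2)),
        f ∉ ({c0, c1} : Finset (Fin n → Fin 2)) → star (φ f) * GHZ n f = 0 := by
      intro f _ hf
      simp only [Finset.mem_insert, Finset.mem_singleton] at hf
      push_neg at hf
      have : ¬ ((∀ i, f i = 0) ∨ (∀ i, f i = 1)) := by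
        rintro (h | h)
        · exact hf.1 (funext h)
        · exact hf.2 (funext h)
      simp [GHZ, this]
    have : star φ ⬝ᵥ GHZ n = ∑ f ∈ ({c0, c1} : Finset (Fin n → Fin 2)),
        star (φ f) * GHZ n f := by
      rw [dotProduct]
      exact (Finset.sum_subset (Finset.subset_univ _) hvan).symm
    rw [this, Finset.sum_pair hcne]
    have g0 : GHZ n c0 = ((1 / Real.sqrt 2 : ℝ) : ℂ) := by simp [GHZ, c0]
    have g1 : GHZ n c1 = ((1 / Real.sqrt 2 : ℝ) : ℂ) := by
      have : (∀ i : Fin n, c1 i = 0) ∨ (∀ i : Fin n, c1 i = 1) := Or.inr (fun _ => rfl)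
      simp [GHZ, this]
    rw [g0, g1]; ring
  -- upper bound
  have hub : ∀ φ ∈ SepStates n, ‖star φ ⬝ᵥ GHZ n‖ ≤ 1 / Real.sqrt 2 := by
    intro φ hφ
    obtain ⟨v, hv, hφv⟩ := hφ
    rw [hover φ ⟨v, hv, hφv⟩]
    rw [norm_mul]
    have : ‖((1 / Real.sqrt 2 : ℝ) : ℂ)‖ = 1 / Real.sqrt 2 := by
      rw [Complex.norm_real, Real.norm_eq_abs, abs_of_pos (by positivity)]
    rw [this]
    have hbound : ‖star (φ c0) + star (φ c1)‖ ≤ 1 := by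
      calc ‖star (φ c0) + star (φ c1)‖
          ≤ ‖star (φ c0)‖ + ‖star (φ c1)‖ := norm_add_le _ _
        _ = ‖φ c0‖ + ‖φ c1‖ := by simp
        _ = (∏ i, ‖v i 0‖) + ∏ i, ‖v i 1‖ := by
            rw [hφv c0, hφv c1, norm_prod, norm_prod]
        _ ≤ 1 := by
            apply prod_add_prod_le n hn _ _ (fun i => norm_nonneg _)
              (fun i => norm_nonneg _)
            intro i
            have := hv i
            rw [Fin.sum_univ_two] at this
            rw [Complex.sq_norm, Complex.sq_norm]
            exact this
    calc (1 / Real.sqrt 2) * ‖star (φ c0) + star (φ c1)‖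
        ≤ (1 / Real.sqrt 2) * 1 := by
          apply mul_le_mul_of_nonneg_left hbound (by positivity)
      _ = 1 / Real.sqrt 2 := mul_one _
  -- witness
  set φ0 : (Fin n → Fin 2) → ℂ := fun f => if f = c0 then 1 else 0 with hφ0
  have hmem : φ0 ∈ SepStates n := by
    refine ⟨fun i x => if x = 0 then 1 else 0, ?_, ?_⟩
    · intro i; simp [Fin.sum_univ_two]
    · intro f
      by_cases h : f = c0
      · subst h; simp [φ0, c0]
      · simp only [φ0, if_neg h]
        have : ∃ i, f i ≠ 0 := by
          by_contra hc; push_neg at hc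
          exact h (funext hc)
        obtain ⟨i, hi⟩ := this
        rw [eq_comm]
        apply Finset.prod_eq_zero (Finset.mem_univ i)
        simp [hi]
  have hwit : ‖star φ0 ⬝ᵥ GHZ n‖ = 1 / Real.sqrt 2 := by
    rw [hover _ hmem]
    have h0 : φ0 c0 = 1 := by simp [φ0]
    have h1 : φ0 c1 = 0 := by simp [φ0, Ne.symm hcne, hcne]
    rw [h0, h1]
    simp [Complex.norm_real, abs_of_pos (by positivity : (0:ℝ) < 1 / Real.sqrt 2)]
  have hSup : EntEigenvalue n (GHZ n) = 1 / Real.sqrt 2 := by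
    apply le_antisymm
    · apply Real.sSup_le
      · rintro r ⟨φ, hφ, rfl⟩
        exact hub φ hφ
      · positivity
    · apply le_csSup
      · exact ⟨1 / Real.sqrt 2, by rintro r ⟨φ, hφ, rfl⟩; exact hub φ hφ⟩
      · exact ⟨φ0, hmem, hwit.symm⟩
  have hsq : (1 / Real.sqrt 2 : ℝ) ^ 2 = 1 / 2 := by
    rw [div_pow, one_pow, Real.sq_sqrt (by norm_num : (0:ℝ) ≤ 2)]
  have hSup2 : sSup {r : ℝ | ∃ φ ∈ SepStates n, r = (‖star φ ⬝ᵥ GHZ n‖)^2} = 1 / 2 := by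
    apply le_antisymm
    · apply Real.sSup_le
      · rintro r ⟨φ, hφ, rfl⟩
        calc (‖star φ ⬝ᵥ GHZ n‖)^2 ≤ (1 / Real.sqrt 2)^2 :=
              pow_le_pow_left₀ (norm_nonneg _) (hub φ hφ) 2
          _ = 1 / 2 := hsq
      · norm_num
    · apply le_csSup
      · refine ⟨1/2, ?_⟩
        rintro r ⟨φ, hφ, rfl⟩
        calc (‖star φ ⬝ᵥ GHZ n‖)^2 ≤ (1 / Real.sqrt 2)^2 :=
              pow_le_pow_left₀ (norm_nonneg _) (hub φ hφ) 2
          _ = 1 / 2 := hsq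
      · exact ⟨φ0, hmem, by rw [hwit, hsq]⟩
  refine ⟨hSup, ?_⟩
  rw [GeomEnt, hSup2]
  norm_num
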